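/- arXiv:1511.05368 — 4 statements merged into one kernel-verified Lean document; each statement's English description precedes it below -/
import Mathlib

section
/- Let E₁ and E₂ be directed graphs with free path groupoids G₁ = G(E₁) and G₂ = G(E₂), and let h : Arr(G₁) → Arr(G₂) be a groupoid homomorphism whose restriction to W₁ := W(E₁) is injective. Then: (a) for all α, β ∈ W₁, the pair (α, β) is composable (i.e. r(α) = s(β)) if and only if (h(α), h(β)) is composable; (b) for all α, β ∈ W₁, r(α) = r(β) if and only if r(h(α)) = r(h(β)). -/
open CategoryTheory

universe u v u' v'

/-- The set of arrows of a groupoid. -/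
abbrev Arr (C : Type u) [Groupoid.{v} C] : Type (max u v) := Σ (x y : C), x ⟶ y

/-- Two arrows `g₁ : x ⟶ y` and `g₂ : z ⟶ w` are composable if `y = z`. -/
def Arr.Composable {C : Type u} [Groupoid.{v} C] (g₁ g₂ : Arr C) : Prop := g₁.2.1 = g₂.1

/-- Composition of composable arrows. -/
def Arr.comp {C : Type u} [Groupoid.{v} C] (g₁ g₂ : Arr C) (h : g₁.Composable g₂) : Arr C :=
  ⟨g₁.1, g₂.2.1, g₁.2.2 ≫ eqToHom h ≫ g₂.2.2⟩

/-- The identity arrow at an object. -/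
def idArr {C : Type u} [Groupoid.{v} C] (x : C) : Arr C := ⟨x, x, 𝟙 x⟩

/-- Inverse of an arrow. -/
def Arr.inv {C : Type u} [Groupoid.{v} C] (g : Arr C) : Arr C :=
  ⟨g.2.1, g.1, Groupoid.inv g.2.2⟩

/-- A groupoid homomorphism, as a map on arrows preserving composability and composition. -/
def IsGroupoidHom {C : Type u} {D : Type u'} [Groupoid.{v} C] [Groupoid.{v'} D]
    (h : Arr C → Arr D) : Prop :=
  ∀ g₁ g₂ : Arr C, ∀ hc : g₁.Composable g₂,
    ∃ hc' : (h g₁).Composable (h g₂), h (g₁.comp g₂ hc) = (h g₁).comp (h g₂) hc'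

/-- The arrow of the free groupoid associated to a path in the quiver `V`;
this is the image of `p` under the canonical functor `Paths V ⥤ FreeGroupoid V`
extending the inclusion of `V`. -/
def pathArrow (V : Type u) [Quiver.{v + 1} V] {x y : V} (p : Quiver.Path x y) :
    Arr (Quiver.FreeGroupoid V) :=
  ⟨(Quiver.FreeGroupoid.of V).obj x, (Quiver.FreeGroupoid.of V).obj y,
    composePath ((Quiver.FreeGroupoid.of V).mapPath p)⟩

/-- The set `W(E)` of arrows of `FreeGroupoid V` that are images of finite paths of `V`. -/
def WSet (V : Type u) [Quiver.{v + 1} V] : Set (Arr (Quiver.FreeGroupoid V)) :=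
  {a | ∃ (x y : V) (p : Quiver.Path x y), a = pathArrow V p}

/-- A groupoid homomorphism sends identity arrows to identity arrows. -/
lemma isGroupoidHom_idArr {C : Type u} {D : Type u'} [Groupoid.{v} C] [Groupoid.{v'} D]
    (h : Arr C → Arr D) (hhom : IsGroupoidHom h) (x : C) :
    h (idArr x) = idArr (h (idArr x)).1 := by
  obtain ⟨hc', he⟩ := hhom (idArr x) (idArr x) rfl
  have hid : (idArr x).comp (idArr x) rfl = idArr x := by
    simp [Arr.comp, idArr]
  rw [hid] at he
  revert hc' he
  generalize h (idArr x) = g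
  rintro hc' he
  obtain ⟨a, b, f⟩ := g
  cases hc'
  simp only [Arr.comp, eqToHom_refl, Category.id_comp] at he
  obtain ⟨-, h2⟩ := Sigma.ext_iff.mp he
  obtain ⟨-, h3⟩ := Sigma.ext_iff.mp (eq_of_heq h2)
  have hf : f ≫ f = f := (eq_of_heq h3).symm
  have hone : f = 𝟙 _ := by rw [← cancel_epi f, Category.comp_id, hf]
  rw [hone]
  rfl

/-- If a groupoid homomorphism between free path groupoids is injective on `W(E₁)`, then for
`α, β ∈ W(E₁)`: (a) `(α, β)` is composable iff `(h(α), h(β))` is composable;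
(b) `r(α) = r(β)` iff `r(h(α)) = r(h(β))`. -/
theorem groupoidHom_injOn_composable_iff
    (V₁ : Type u) [Quiver.{v + 1} V₁] (V₂ : Type u') [Quiver.{v' + 1} V₂]
    (h : Arr (Quiver.FreeGroupoid V₁) → Arr (Quiver.FreeGroupoid V₂)) (hhom : IsGroupoidHom h)
    (hinj : Set.InjOn h (WSet V₁)) :
    ∀ a b : Arr (Quiver.FreeGroupoid V₁), a ∈ WSet V₁ → b ∈ WSet V₁ →
      ((a.Composable b ↔ (h a).Composable (h b)) ∧
       (a.2.1 = b.2.1 ↔ (h a).2.1 = (h b).2.1)) := by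
  intro a b ha hb
  obtain ⟨x₁, y₁, p, rfl⟩ := ha
  obtain ⟨x₂, y₂, q, rfl⟩ := hb
  set a := pathArrow V₁ p with hadef
  set b := pathArrow V₁ q with hbdef
  -- identity arrows at the relevant vertices
  set e₁ : Arr (Quiver.FreeGroupoid V₁) := idArr ((Quiver.FreeGroupoid.of V₁).obj y₁) with he₁
  set e₂ : Arr (Quiver.FreeGroupoid V₁) := idArr ((Quiver.FreeGroupoid.of V₁).obj y₂) with he₂
  set s₂ : Arr (Quiver.FreeGroupoid V₁) := idArr ((Quiver.FreeGroupoid.of V₁).obj x₂) with hs₂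
  have me₁ : e₁ ∈ WSet V₁ := ⟨y₁, y₁, Quiver.Path.nil, rfl⟩
  have me₂ : e₂ ∈ WSet V₁ := ⟨y₂, y₂, Quiver.Path.nil, rfl⟩
  have ms₂ : s₂ ∈ WSet V₁ := ⟨x₂, x₂, Quiver.Path.nil, rfl⟩
  have hA : (h a).2.1 = (h e₁).1 := (hhom a e₁ rfl).choose
  have hB : (h b).2.1 = (h e₂).1 := (hhom b e₂ rfl).choose
  have hC : (h s₂).2.1 = (h b).1 := (hhom s₂ b rfl).choose
  have hids₂ : h s₂ = idArr (h s₂).1 := isGroupoidHom_idArr h hhom _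
  have hide₁ : h e₁ = idArr (h e₁).1 := isGroupoidHom_idArr h hhom _
  have hide₂ : h e₂ = idArr (h e₂).1 := isGroupoidHom_idArr h hhom _
  constructor
  · constructor
    · intro hc
      exact (hhom a b hc).choose
    · intro hc'
      have h1 : (h e₁).1 = (h s₂).1 := by
        have h2 : (h s₂).2.1 = (h s₂).1 := by rw [hids₂]; rfl
        rw [← hA, ← h2]
        exact hc'.trans hC.symm
      have h3 : h e₁ = h s₂ := by rw [hide₁, hids₂, h1]
      have h4 : e₁ = s₂ := hinj me₁ ms₂ h3
      exact congrArg Sigma.fst h4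
  · constructor
    · intro hr
      have h4 : e₁ = e₂ := by rw [he₁, he₂]; exact congrArg idArr hr
      rw [hA, hB, h4]
    · intro hr
      have h1 : (h e₁).1 = (h e₂).1 := by rw [← hA, ← hB]; exact hr
      have h3 : h e₁ = h e₂ := by rw [hide₁, hide₂, h1]
      have h4 : e₁ = e₂ := hinj me₁ me₂ h3
      exact congrArg Sigma.fst h4
end

section
/- Let E₁ and E₂ be directed graphs with free path groupoids G₁ = G(E₁) and G₂ = G(E₂), and let h : Arr(G₁) → Arr(G₂) be a groupoid homomorphism whose restriction to W₁ := W(E₁) is injective and which satisfies h(W₁) = W₂ := W(E₂). Then for every α ∈ W₁: α = ⟦e⟧ for some edge e of E₁ (i.e. α is the image of a path of length 1) if and only if h(α) = ⟦f⟧ for some edge f of E₂. -/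
open CategoryTheory

universe u v u' v'

/-! ### Auxiliary machinery -/

section Aux

/-- An idempotent arrow: one that is composable with itself with composite itself. -/
def IsIdem {C : Type u} [Groupoid.{v} C] (a : Arr C) : Prop :=
  ∃ hc : a.Composable a, a.comp a hc = a

lemma isIdem_idArr {C : Type u} [Groupoid.{v} C] (x : C) : IsIdem (idArr x) := by
  refine ⟨rfl, ?_⟩
  simp [idArr, Arr.comp]

lemma isIdem_iff {C : Type u} [Groupoid.{v} C] (a : Arr C) :
    IsIdem a ↔ ∃ x, a = idArr x := by
  constructor
  · rintro ⟨hc, hcomp⟩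
    obtain ⟨x, y, f⟩ := a
    have hyx : y = x := hc
    subst hyx
    simp only [Arr.comp, eqToHom_refl, Category.id_comp] at hcomp
    injection hcomp with h1 h2
    injection h2 with h3 hcomp'
    have hf : f ≫ f = f ≫ 𝟙 y := by simpa [show eqToHom hc = 𝟙 _ from eqToHom_refl _ _] using hcomp'
    exact ⟨y, by simp [idArr, (cancel_epi f).mp hf]⟩
  · rintro ⟨x, rfl⟩; exact isIdem_idArr x

lemma idArr_comp {C : Type u} [Groupoid.{v} C] (a : Arr C) (hc : (idArr a.1).Composable a) :
    (idArr a.1).comp a hc = a := by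
  obtain ⟨x, y, f⟩ := a
  simp [idArr, Arr.comp]

lemma comp_idArr {C : Type u} [Groupoid.{v} C] (a : Arr C) (hc : a.Composable (idArr a.2.1)) :
    a.comp (idArr a.2.1) hc = a := by
  obtain ⟨x, y, f⟩ := a
  simp [idArr, Arr.comp]
  exact (congrArg (f ≫ ·) (eqToHom_refl _ _)).trans (Category.comp_id f)

variable (V : Type u) [Quiver.{v + 1} V]

/-- The length prefunctor. -/
def lenPre : V ⥤q SingleObj (Multiplicative ℤ) where
  obj _ := SingleObj.star _
  map _ := Multiplicative.ofAdd 1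

/-- The length functor on the free groupoid. -/
def lenF : Quiver.FreeGroupoid V ⥤ SingleObj (Multiplicative ℤ) :=
  Quiver.FreeGroupoid.lift (lenPre V)

lemma lenF_of {x y : V} (e : x ⟶ y) :
    (lenF V).map ((Quiver.FreeGroupoid.of V).map e) = Multiplicative.ofAdd 1 := by
  have h := Quiver.FreeGroupoid.lift_spec (lenPre V)
  exact congrArg (fun (F : V ⥤q SingleObj (Multiplicative ℤ)) => F.map e) h

/-- The length of an arrow of a free groupoid. -/
def len (a : Arr (Quiver.FreeGroupoid V)) : ℤ :=
  Multiplicative.toAdd ((lenF V).map a.2.2)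

lemma len_pathArrow {x y : V} (p : Quiver.Path x y) :
    len V (pathArrow V p) = p.length := by
  induction p with
  | nil => simp [len, pathArrow, lenF]; rfl
  | cons q e ih =>
    simp only [pathArrow, Prefunctor.mapPath_cons, composePath_cons, Functor.map_comp,
      len, lenF_of] at ih ⊢
    rw [SingleObj.comp_as_mul, toAdd_mul, ih]
    simp [Quiver.Path.length_cons]; ring

lemma eqToHom_singleObj {M : Type*} [Group M] {x y : SingleObj M} (h : x = y) :
    eqToHom h = (1 : M) := by subst h; rfl

lemma len_comp (a b : Arr (Quiver.FreeGroupoid V)) (hc : a.Composable b) :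
    len V (a.comp b hc) = len V a + len V b := by
  obtain ⟨x, y, f⟩ := a
  obtain ⟨z, w, g⟩ := b
  have hzy : y = z := hc
  subst hzy
  simp only [len, Arr.comp, eqToHom_refl, show eqToHom hc = 𝟙 _ from eqToHom_refl _ _, Category.id_comp, Functor.map_comp]
  rw [SingleObj.comp_as_mul, toAdd_mul]
  ring

lemma len_of_isIdem (a : Arr (Quiver.FreeGroupoid V)) (ha : IsIdem a) : len V a = 0 := by
  obtain ⟨hc, hcomp⟩ := ha
  have := len_comp V a a hc
  rw [hcomp] at this
  omega

lemma pathArrow_nil (x : V) :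
    pathArrow V (Quiver.Path.nil : Quiver.Path x x) = idArr (C := Quiver.FreeGroupoid V) ((Quiver.FreeGroupoid.of V).obj x) := rfl

lemma of_obj_injective : Function.Injective (Quiver.FreeGroupoid.of V).obj := by
  intro a b hab
  have h2 : (⟨a⟩ : CategoryTheory.Quotient (Quiver.FreeGroupoid.redStep (V := V))) = ⟨b⟩ := hab
  exact congrArg (fun z : CategoryTheory.Quotient (Quiver.FreeGroupoid.redStep (V := V)) => z.as) h2

lemma pathArrow_comp {x y z : V} (p : Quiver.Path x y) (q : Quiver.Path y z)
    (hc : (pathArrow V p).Composable (pathArrow V q)) :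
    (pathArrow V p).comp (pathArrow V q) hc = pathArrow V (p.comp q) := by
  simp only [pathArrow, Arr.comp, Prefunctor.mapPath_comp, composePath_comp]
  congr 1
  · congr 1
    simp [eqToHom_refl]

lemma idArr_mem_WSet (z : Quiver.FreeGroupoid V) : idArr z ∈ WSet V := by
  obtain ⟨z⟩ := z
  exact ⟨z, z, Quiver.Path.nil, rfl⟩

lemma comp_mem_WSet {a b : Arr (Quiver.FreeGroupoid V)} (ha : a ∈ WSet V) (hb : b ∈ WSet V)
    (hc : a.Composable b) : a.comp b hc ∈ WSet V := by
  obtain ⟨x, y, p, rfl⟩ := ha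
  obtain ⟨u, w, q, rfl⟩ := hb
  have hyu : y = u := of_obj_injective V hc
  subst hyu
  exact ⟨x, w, p.comp q, (pathArrow_comp V p q hc)⟩

/-- Characterisation of the arrows that are single edges, intrinsic to `(W, comp, idem)`. -/
lemma edge_char {a : Arr (Quiver.FreeGroupoid V)} (ha : a ∈ WSet V) :
    (∃ (x y : V) (e : x ⟶ y), a = pathArrow V e.toPath) ↔
    (¬ IsIdem a ∧ ∀ b c : Arr (Quiver.FreeGroupoid V), b ∈ WSet V → c ∈ WSet V →
      ∀ hc : b.Composable c, a = b.comp c hc → IsIdem b ∨ IsIdem c) := by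
  obtain ⟨x, y, p, rfl⟩ := ha
  constructor
  · rintro ⟨x', y', e, he⟩
    have hlen : len V (pathArrow V p) = 1 := by
      rw [he, len_pathArrow]; simp [Quiver.Hom.toPath]
    constructor
    · intro hid
      rw [len_of_isIdem V _ hid] at hlen
      omega
    · rintro b c hb hc hcomp heq
      obtain ⟨xb, yb, pb, rfl⟩ := hb
      obtain ⟨xc, yc, pc, rfl⟩ := hc
      rw [heq, len_comp, len_pathArrow, len_pathArrow] at hlen
      have : pb.length = 0 ∨ pc.length = 0 := by omega
      rcases this with h0 | h0
      · left
        obtain rfl := Quiver.Path.eq_of_length_zero pb h0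
        obtain rfl := Quiver.Path.eq_nil_of_length_zero pb h0
        rw [pathArrow_nil]
        exact isIdem_idArr _
      · right
        obtain rfl := Quiver.Path.eq_of_length_zero pc h0
        obtain rfl := Quiver.Path.eq_nil_of_length_zero pc h0
        rw [pathArrow_nil]
        exact isIdem_idArr _
  · rintro ⟨hni, hdec⟩
    match p with
    | Quiver.Path.nil =>
        exact absurd (by rw [pathArrow_nil]; exact isIdem_idArr _) hni
    | Quiver.Path.cons (b := c) q e =>
        rcases Nat.eq_zero_or_pos q.length with h0 | hpos
        · obtain rfl := Quiver.Path.eq_of_length_zero q h0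
          obtain rfl := Quiver.Path.eq_nil_of_length_zero q h0
          exact ⟨x, y, e, rfl⟩
        · exfalso
          have hq : pathArrow V (q.cons e) =
              (pathArrow V q).comp (pathArrow V e.toPath) rfl := by
            refine Eq.trans ?_ (pathArrow_comp V q e.toPath rfl).symm
            simp [Quiver.Hom.toPath]
          have := hdec (pathArrow V q) (pathArrow V e.toPath)
            ⟨_, _, q, rfl⟩ ⟨_, _, e.toPath, rfl⟩ rfl hq
          rcases this with hb | hb
          · have := len_of_isIdem V _ hb
            rw [len_pathArrow] at this
            omega
          · have := len_of_isIdem V _ hb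
            rw [len_pathArrow] at this
            simp [Quiver.Hom.toPath] at this
end Aux

section Transfer

variable {V₁ : Type u} [Quiver.{v + 1} V₁] {V₂ : Type u'} [Quiver.{v' + 1} V₂]
variable (h : Arr (Quiver.FreeGroupoid V₁) → Arr (Quiver.FreeGroupoid V₂)) (hhom : IsGroupoidHom h)
variable (hinj : Set.InjOn h (WSet V₁))

include hhom in
lemma isIdem_map {a : Arr (Quiver.FreeGroupoid V₁)} (ha : IsIdem a) : IsIdem (h a) := by
  obtain ⟨hc, hcomp⟩ := ha
  obtain ⟨hc', hcomp'⟩ := hhom a a hc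
  exact ⟨hc', by rw [← hcomp', hcomp]⟩

include hhom hinj in
lemma isIdem_reflect {a : Arr (Quiver.FreeGroupoid V₁)} (ha : a ∈ WSet V₁)
    (hid : IsIdem (h a)) : IsIdem a := by
  obtain ⟨x, y, p, rfl⟩ := ha
  set a := pathArrow V₁ p with ha_def
  have hI : (idArr a.1 : Arr (Quiver.FreeGroupoid V₁)) ∈ WSet V₁ := idArr_mem_WSet V₁ _
  have hcIa : (idArr a.1).Composable a := rfl
  obtain ⟨hc', hcomp'⟩ := hhom (idArr a.1) a hcIa
  rw [idArr_comp] at hcomp'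
  obtain ⟨w, hw⟩ := (isIdem_iff _).mp (isIdem_map h hhom (isIdem_idArr a.1))
  obtain ⟨z, hz⟩ := (isIdem_iff _).mp hid
  have hwz : w = (h a).1 := by
    have := hc'
    rw [hw] at this
    exact this
  have : h (idArr a.1) = h a := by
    rw [hw, hwz, hz]; rfl
  have heq : idArr a.1 = a := hinj hI ⟨x, y, p, rfl⟩ this
  rw [← heq]
  exact isIdem_idArr _

include hhom hinj in
lemma composable_reflect {b c : Arr (Quiver.FreeGroupoid V₁)} (hb : b ∈ WSet V₁) (hc : c ∈ WSet V₁)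
    (hcc : (h b).Composable (h c)) : b.Composable c := by
  have hIb : (idArr b.2.1 : Arr (Quiver.FreeGroupoid V₁)) ∈ WSet V₁ := idArr_mem_WSet V₁ _
  have hIc : (idArr c.1 : Arr (Quiver.FreeGroupoid V₁)) ∈ WSet V₁ := idArr_mem_WSet V₁ _
  obtain ⟨hc₁, hcomp₁⟩ := hhom b (idArr b.2.1) rfl
  replace hcomp₁ := (congrArg h (comp_idArr b rfl)).symm.trans hcomp₁
  obtain ⟨hc₂, hcomp₂⟩ := hhom (idArr c.1) c rfl
  replace hcomp₂ := (congrArg h (idArr_comp c rfl)).symm.trans hcomp₂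
  obtain ⟨w, hw⟩ := (isIdem_iff _).mp (isIdem_map h hhom (isIdem_idArr b.2.1))
  obtain ⟨w', hw'⟩ := (isIdem_iff _).mp (isIdem_map h hhom (isIdem_idArr c.1))
  have hww : w = (h b).2.1 := by
    have := hc₁; rw [hw] at this; exact this.symm
  have hww' : w' = (h c).1 := by
    have := hc₂; rw [hw'] at this; exact this
  have : h (idArr b.2.1) = h (idArr c.1) := by
    rw [hw, hw', hww, hww', hcc]
  have heq : (idArr b.2.1 : Arr (Quiver.FreeGroupoid V₁)) = idArr c.1 := hinj hIb hIc this
  exact congrArg Sigma.fst heq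

end Transfer

/-- If a groupoid homomorphism between free path groupoids is injective on `W(E₁)` and maps
`W(E₁)` onto `W(E₂)`, then `α ∈ W(E₁)` is the image of a single edge iff `h(α)` is. -/
theorem groupoidHom_length_one_iff
    (V₁ : Type u) [Quiver.{v + 1} V₁] (V₂ : Type u') [Quiver.{v' + 1} V₂]
    (h : Arr (Quiver.FreeGroupoid V₁) → Arr (Quiver.FreeGroupoid V₂)) (hhom : IsGroupoidHom h)
    (hinj : Set.InjOn h (WSet V₁)) (himg : h '' WSet V₁ = WSet V₂) :
    ∀ a : Arr (Quiver.FreeGroupoid V₁), a ∈ WSet V₁ →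
      ((∃ (x y : V₁) (e : x ⟶ y), a = pathArrow V₁ e.toPath) ↔
       (∃ (x y : V₂) (f : x ⟶ y), h a = pathArrow V₂ f.toPath)) := by
  intro a ha
  have hha : h a ∈ WSet V₂ := himg ▸ Set.mem_image_of_mem h ha
  rw [edge_char V₁ ha, edge_char V₂ hha]
  constructor
  · rintro ⟨hni, hdec⟩
    constructor
    · intro hid
      exact hni (isIdem_reflect h hhom hinj ha hid)
    · rintro b c hb hc hcc heq
      obtain ⟨b', hb', rfl⟩ := himg ▸ hb
      obtain ⟨c', hc', rfl⟩ := himg ▸ hc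
      have hcomp : b'.Composable c' := composable_reflect h hhom hinj hb' hc' hcc
      obtain ⟨hc'', hcomp''⟩ := hhom b' c' hcomp
      have : h a = h (b'.comp c' hcomp) := by rw [hcomp'', heq]
      have haeq : a = b'.comp c' hcomp :=
        hinj ha (comp_mem_WSet V₁ hb' hc' hcomp) this
      rcases hdec b' c' hb' hc' hcomp haeq with hid | hid
      · exact Or.inl (isIdem_map h hhom hid)
      · exact Or.inr (isIdem_map h hhom hid)
  · rintro ⟨hni, hdec⟩
    constructor
    · intro hid
      exact hni (isIdem_map h hhom hid)
    · rintro b c hb hc hcc heq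
      obtain ⟨hc'', hcomp''⟩ := hhom b c hcc
      have : h a = (h b).comp (h c) hc'' := by rw [heq, hcomp'']
      have hhb : h b ∈ WSet V₂ := himg ▸ Set.mem_image_of_mem h hb
      have hhc : h c ∈ WSet V₂ := himg ▸ Set.mem_image_of_mem h hc
      rcases hdec (h b) (h c) hhb hhc hc'' this with hid | hid
      · exact Or.inl (isIdem_reflect h hhom hinj hb hid)
      · exact Or.inr (isIdem_reflect h hhom hinj hc hid)
end

section
/- Let E₁ and E₂ be directed graphs with free path groupoids G₁ = G(E₁) and G₂ = G(E₂), and let h : Arr(G₁) → Arr(G₂) be a groupoid homomorphism whose restriction to W₁ := W(E₁) is injective and which satisfies h(W₁) = W₂ := W(E₂). Then h preserves path length: for every finite path p in E₁ (a path in the path category Paths(E₁)), there exists a finite path q in E₂ with length(q) = length(p) and h(⟦p⟧) = ⟦q⟧. -/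
open CategoryTheory

universe u v u' v'

namespace GpdAux

section GeneralGroupoid

variable {C : Type u} [Groupoid.{v} C] {D : Type u'} [Groupoid.{v'} D]

lemma arrExt {x y : C} {f g : x ⟶ y} (hfg : f = g) :
    (⟨x, y, f⟩ : Arr C) = ⟨x, y, g⟩ := by rw [hfg]

lemma comp_congr {a a' b b' : Arr C} (ha : a = a') (hb : b = b')
    (hc : a.Composable b) (hc' : a'.Composable b') :
    a.comp b hc = a'.comp b' hc' := by subst ha; subst hb; rfl

lemma idArr_comp_idArr (x : C) (hc : (idArr x).Composable (idArr x)) :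
    (idArr x).comp (idArr x) hc = idArr x := by
  simp [idArr, Arr.comp]

lemma comp_idArr (a : Arr C) (hc : a.Composable (idArr a.2.1)) :
    a.comp (idArr a.2.1) hc = a := by
  obtain ⟨x, y, f⟩ := a
  simp [idArr, Arr.comp]
  erw [eqToHom_refl, Category.comp_id]

lemma idArr_comp (a : Arr C) (hc : (idArr a.1).Composable a) :
    (idArr a.1).comp a hc = a := by
  obtain ⟨x, y, f⟩ := a
  simp [idArr, Arr.comp]

lemma eq_idArr_of_idem {a : Arr C} (hc : a.Composable a) (he : a.comp a hc = a) :
    a = idArr a.1 := by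
  obtain ⟨x, y, f⟩ := a
  have hyx : y = x := hc
  subst hyx
  simp only [Arr.comp, eqToHom_refl, Category.id_comp] at he
  injection he with h1 h2
  injection h2 with h3 h4
  have hff : f ≫ f = f := by
    rwa [show eqToHom hc = 𝟙 _ from eqToHom_refl _ _, Category.id_comp] at h4
  have hf1 : f = 𝟙 y := by
    have : f ≫ f = 𝟙 y ≫ f := by simpa using hff
    exact (cancel_mono f).mp this
  rw [hf1]
  rfl

variable {h : Arr C → Arr D}

lemma h_idArr (hhom : IsGroupoidHom h) (x : C) :
    h (idArr x) = idArr (h (idArr x)).1 := by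
  obtain ⟨hc', key⟩ := hhom (idArr x) (idArr x) rfl
  erw [idArr_comp_idArr] at key
  exact eq_idArr_of_idem hc' key.symm

lemma h_id_right (hhom : IsGroupoidHom h) (a : Arr C) :
    h (idArr a.2.1) = idArr (h a).2.1 := by
  obtain ⟨hc', key⟩ := hhom a (idArr a.2.1) rfl
  erw [comp_idArr] at key
  have hid := h_idArr hhom a.2.1
  have h21 := congrArg (fun s : Arr D => s.2.1) key
  have h21' : (h a).2.1 = (h (idArr a.2.1)).2.1 := h21
  have h5p := congrArg (fun s : Arr D => s.2.1) hid
  have h5 : (h (idArr a.2.1)).2.1 = (h (idArr a.2.1)).1 := h5p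
  rw [h21', h5]
  exact hid

lemma h_id_left (hhom : IsGroupoidHom h) (a : Arr C) :
    h (idArr a.1) = idArr (h a).1 := by
  obtain ⟨hc', key⟩ := hhom (idArr a.1) a rfl
  erw [idArr_comp] at key
  have hid := h_idArr hhom a.1
  have h1 := congrArg (fun s : Arr D => s.1) key
  have h1' : (h a).1 = (h (idArr a.1)).1 := h1
  rw [h1']
  exact hid

end GeneralGroupoid

section FreeGpd

variable (V : Type u) [Quiver.{v + 1} V]

def lenPhi : V ⥤q SingleObj (Multiplicative ℤ) where
  obj _ := SingleObj.star _
  map _ := Multiplicative.ofAdd 1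

def lenF : Quiver.FreeGroupoid V ⥤ SingleObj (Multiplicative ℤ) := Quiver.FreeGroupoid.lift (lenPhi V)

lemma lenF_of {x y : V} (e : x ⟶ y) :
    (lenF V).map ((Quiver.FreeGroupoid.of V).map e) = Multiplicative.ofAdd (1 : ℤ) := by
  show _ = (lenPhi V).map e
  exact eq_of_heq (congr_arg_heq (fun F : V ⥤q SingleObj (Multiplicative ℤ) => F.map e)
    (Quiver.FreeGroupoid.lift_spec (lenPhi V)))

lemma of_obj_inj {x y : V} (hxy : (Quiver.FreeGroupoid.of V).obj x = (Quiver.FreeGroupoid.of V).obj y) :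
    x = y := by injection hxy

lemma lenF_path {x y : V} (p : Quiver.Path x y) :
    (lenF V).map (composePath ((Quiver.FreeGroupoid.of V).mapPath p)) =
      Multiplicative.ofAdd (p.length : ℤ) := by
  induction p with
  | nil =>
      show (lenF V).map (𝟙 _) = _
      rw [CategoryTheory.Functor.map_id, SingleObj.id_as_one]
      rfl
  | cons p e ih =>
      rw [Prefunctor.mapPath_cons, composePath_cons, Functor.map_comp, ih, lenF_of,
        SingleObj.comp_as_mul, ← ofAdd_add]
      congr 1
      rw [Quiver.Path.length_cons]
      push_cast
      ring

def alen (a : Arr (Quiver.FreeGroupoid V)) : ℤ := Multiplicative.toAdd ((lenF V).map a.2.2)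

lemma alen_pathArrow {x y : V} (p : Quiver.Path x y) :
    alen V (pathArrow V p) = p.length := by
  show Multiplicative.toAdd ((lenF V).map (composePath ((Quiver.FreeGroupoid.of V).mapPath p))) = _
  rw [lenF_path]
  rfl

lemma alen_idArr (z : Quiver.FreeGroupoid V) : alen V (idArr z) = 0 := by
  show Multiplicative.toAdd ((lenF V).map (𝟙 z)) = 0
  rw [CategoryTheory.Functor.map_id, SingleObj.id_as_one]
  rfl

lemma length_inj {x y x' y' : V} {p : Quiver.Path x y} {q : Quiver.Path x' y'}
    (hpq : pathArrow V p = pathArrow V q) : p.length = q.length := by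
  have := congrArg (alen V) hpq
  rw [alen_pathArrow, alen_pathArrow] at this
  exact_mod_cast this

lemma length_zero_of_id {x y : V} {p : Quiver.Path x y} {z : Quiver.FreeGroupoid V}
    (hp : pathArrow V p = idArr z) : p.length = 0 := by
  have := congrArg (alen V) hp
  rw [alen_pathArrow, alen_idArr] at this
  exact_mod_cast this

lemma pathArrow_comp {x y z : V} (p : Quiver.Path x y) (q : Quiver.Path y z)
    (hc : (pathArrow V p).Composable (pathArrow V q)) :
    (pathArrow V p).comp (pathArrow V q) hc = pathArrow V (p.comp q) := by
  apply arrExt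
  erw [eqToHom_refl, Category.id_comp, Prefunctor.mapPath_comp, composePath_comp]
  rfl

lemma pathArrow_cons_eq {x b c : V} (p : Quiver.Path x b) (e : b ⟶ c) :
    pathArrow V (p.comp e.toPath) = pathArrow V (p.cons e) := by
  rw [show p.comp e.toPath = p.cons e from by simp [Quiver.Hom.toPath]]

end FreeGpd

section Hom

variable {V₁ : Type u} [Quiver.{v + 1} V₁] {V₂ : Type u'} [Quiver.{v' + 1} V₂]
variable {h : Arr (Quiver.FreeGroupoid V₁) → Arr (Quiver.FreeGroupoid V₂)}

/-- Pulling back composability along `h`. -/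
lemma pull (hhom : IsGroupoidHom h) (hinj : Set.InjOn h (WSet V₁))
    {x y x' y' : V₁} (s : Quiver.Path x y) (t : Quiver.Path x' y')
    (hc : (h (pathArrow V₁ s)).Composable (h (pathArrow V₁ t))) : y = x' := by
  have h1 : h (idArr ((Quiver.FreeGroupoid.of V₁).obj y)) = idArr (h (pathArrow V₁ s)).2.1 :=
    h_id_right hhom (pathArrow V₁ s)
  have h2 : h (idArr ((Quiver.FreeGroupoid.of V₁).obj x')) = idArr (h (pathArrow V₁ t)).1 :=
    h_id_left hhom (pathArrow V₁ t)
  have h3 : h (idArr ((Quiver.FreeGroupoid.of V₁).obj y)) =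
      h (idArr ((Quiver.FreeGroupoid.of V₁).obj x')) := by
    rw [h1, hc]
    exact h2.symm
  have h4 := hinj ⟨y, y, Quiver.Path.nil, rfl⟩ ⟨x', x', Quiver.Path.nil, rfl⟩ h3
  exact of_obj_inj V₁ (congrArg (fun s : Arr (Quiver.FreeGroupoid V₁) => s.1) h4)

/-- The image of (the class of) a single edge is not (the class of) a trivial path. -/
lemma edge_image_pos (hhom : IsGroupoidHom h) (hinj : Set.InjOn h (WSet V₁))
    {x y : V₁} (e : x ⟶ y) {a b : V₂} (r : Quiver.Path a b)
    (hr : h (pathArrow V₁ e.toPath) = pathArrow V₂ r) : 1 ≤ r.length := by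
  by_contra hcon
  have h0 : r.length = 0 := by omega
  obtain rfl : a = b := Quiver.Path.eq_of_length_zero r h0
  obtain rfl : r = Quiver.Path.nil := Quiver.Path.eq_nil_of_length_zero r h0
  -- now `hr : h ⟦e.toPath⟧ = idArr (of a)`
  have hr' : h (pathArrow V₁ e.toPath) = idArr ((Quiver.FreeGroupoid.of V₂).obj a) := hr
  have h1 : h (idArr ((Quiver.FreeGroupoid.of V₁).obj x)) =
      idArr ((Quiver.FreeGroupoid.of V₂).obj a) := by
    have := h_id_left hhom (pathArrow V₁ e.toPath)
    rw [hr'] at this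
    exact this
  have h2 : h (idArr ((Quiver.FreeGroupoid.of V₁).obj y)) =
      idArr ((Quiver.FreeGroupoid.of V₂).obj a) := by
    have := h_id_right hhom (pathArrow V₁ e.toPath)
    rw [hr'] at this
    exact this
  have hxy : x = y := by
    have h4 := hinj ⟨x, x, Quiver.Path.nil, rfl⟩ ⟨y, y, Quiver.Path.nil, rfl⟩
      (h1.trans h2.symm)
    exact of_obj_inj V₁ (congrArg (fun s : Arr (Quiver.FreeGroupoid V₁) => s.1) h4)
  subst hxy
  obtain ⟨hc', key⟩ := hhom (pathArrow V₁ e.toPath) (pathArrow V₁ e.toPath) rfl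
  erw [pathArrow_comp] at key
  erw [comp_congr hr' hr' hc' rfl, idArr_comp_idArr, ← hr'] at key
  have h5 := hinj ⟨x, x, e.toPath.comp e.toPath, rfl⟩ ⟨x, x, e.toPath, rfl⟩ key
  have h6 := length_inj V₁ h5
  simp [Quiver.Path.length_comp, Quiver.Hom.toPath] at h6

lemma lenA (hhom : IsGroupoidHom h) (hinj : Set.InjOn h (WSet V₁))
    (himg : h '' WSet V₁ = WSet V₂) :
    ∀ {x y : V₁} (p : Quiver.Path x y) {x' y' : V₂} (q : Quiver.Path x' y'),
      h (pathArrow V₁ p) = pathArrow V₂ q → p.length ≤ q.length := by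
  intro x y p
  induction p with
  | nil => intro x' y' q _; exact Nat.zero_le _
  | @cons b c p e ih =>
    intro x' y' q hq
    obtain ⟨hc', key⟩ := hhom (pathArrow V₁ p) (pathArrow V₁ e.toPath) rfl
    have hp1 : h (pathArrow V₁ p) ∈ WSet V₂ := by
      rw [← himg]; exact Set.mem_image_of_mem h ⟨_, _, p, rfl⟩
    obtain ⟨a1, b1, q1, hq1⟩ := hp1
    have hp2 : h (pathArrow V₁ e.toPath) ∈ WSet V₂ := by
      rw [← himg]; exact Set.mem_image_of_mem h ⟨_, _, e.toPath, rfl⟩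
    obtain ⟨a2, b2, q2, hq2⟩ := hp2
    have hb : b1 = a2 := by
      apply of_obj_inj V₂
      have := hc'
      rw [hq1, hq2] at this
      exact this
    subst hb
    erw [pathArrow_comp, pathArrow_cons_eq] at key
    erw [comp_congr hq1 hq2 hc' rfl, pathArrow_comp] at key
    have hlen : q.length = q1.length + q2.length := by
      have := length_inj V₂ (hq.symm.trans key)
      rw [Quiver.Path.length_comp] at this
      exact this
    have h2 : 1 ≤ q2.length := edge_image_pos hhom hinj e q2 hq2
    have h1 : p.length ≤ q1.length := ih q1 hq1
    rw [Quiver.Path.length_cons, hlen]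
    omega

lemma lenB (hhom : IsGroupoidHom h) (hinj : Set.InjOn h (WSet V₁))
    (himg : h '' WSet V₁ = WSet V₂) :
    ∀ {x' y' : V₂} (q : Quiver.Path x' y'),
      ∃ (x y : V₁) (s : Quiver.Path x y),
        h (pathArrow V₁ s) = pathArrow V₂ q ∧ q.length ≤ s.length := by
  intro x' y' q
  induction q with
  | nil =>
    have hmem : pathArrow V₂ (Quiver.Path.nil : Quiver.Path x' x') ∈ WSet V₂ :=
      ⟨x', x', Quiver.Path.nil, rfl⟩
    rw [← himg] at hmem
    obtain ⟨a, ⟨xa, ya, s, rfl⟩, hs⟩ := hmem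
    exact ⟨xa, ya, s, hs, Nat.zero_le _⟩
  | @cons b c q f ih =>
    obtain ⟨xs, ys, s, hs, hls⟩ := ih
    have hmem : pathArrow V₂ f.toPath ∈ WSet V₂ := ⟨_, _, f.toPath, rfl⟩
    rw [← himg] at hmem
    obtain ⟨a, ⟨xt, yt, t, rfl⟩, ht⟩ := hmem
    have hyx : ys = xt := by
      apply pull hhom hinj s t
      show (h (pathArrow V₁ s)).2.1 = (h (pathArrow V₁ t)).1
      rw [hs, ht]
      rfl
    subst hyx
    obtain ⟨hc', key⟩ := hhom (pathArrow V₁ s) (pathArrow V₁ t) rfl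
    erw [pathArrow_comp] at key
    erw [comp_congr hs ht hc' rfl, pathArrow_comp, pathArrow_cons_eq] at key
    have hlt : 1 ≤ t.length := by
      rcases t with _ | ⟨t', e'⟩
      · exfalso
        have hzero : pathArrow V₂ f.toPath =
            idArr (h (pathArrow V₁ (Quiver.Path.nil : Quiver.Path ys ys))).1 := by
          rw [← ht]
          exact h_idArr hhom ((Quiver.FreeGroupoid.of V₁).obj ys)
        have hz := length_zero_of_id V₂ hzero
        simp [Quiver.Hom.toPath] at hz
      · rw [Quiver.Path.length_cons]
        omega
    refine ⟨xs, yt, s.comp t, key, ?_⟩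
    rw [Quiver.Path.length_comp, Quiver.Path.length_cons]
    omega

end Hom

end GpdAux

open GpdAux in
/-- If a groupoid homomorphism between free path groupoids is injective on `W(E₁)` and maps
`W(E₁)` onto `W(E₂)`, then it preserves path length: the image of (the class of) a finite
path `p` of `E₁` is the class of a finite path of `E₂` of the same length. -/
theorem groupoidHom_preserves_length
    (V₁ : Type u) [Quiver.{v + 1} V₁] (V₂ : Type u') [Quiver.{v' + 1} V₂]
    (h : Arr (Quiver.FreeGroupoid V₁) → Arr (Quiver.FreeGroupoid V₂)) (hhom : IsGroupoidHom h)
    (hinj : Set.InjOn h (WSet V₁)) (himg : h '' WSet V₁ = WSet V₂) :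
    ∀ (x y : V₁) (p : Quiver.Path x y),
      ∃ (x' y' : V₂) (q : Quiver.Path x' y'),
        q.length = p.length ∧ h (pathArrow V₁ p) = pathArrow V₂ q := by
  intro x y p
  have hmem : h (pathArrow V₁ p) ∈ WSet V₂ := by
    rw [← himg]; exact Set.mem_image_of_mem h ⟨x, y, p, rfl⟩
  obtain ⟨x', y', q, hq⟩ := hmem
  refine ⟨x', y', q, ?_, hq⟩
  have hle1 : p.length ≤ q.length := lenA hhom hinj himg p q hq
  obtain ⟨xs, ys, s, hs, hle2⟩ := lenB hhom hinj himg q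
  have hsp : pathArrow V₁ s = pathArrow V₁ p :=
    hinj ⟨_, _, s, rfl⟩ ⟨_, _, p, rfl⟩ (by rw [hs, ← hq])
  have := length_inj V₁ hsp
  omega
end

section
/- Let E be a directed graph satisfying condition (L), i.e. every closed path in E has an exit. Then for every closed path α in E (a finite path with s(α) = r(α) and length ≥ 1), there exists ξ ∈ X with s(ξ) = s(α) such that α is not an initial subpath of ξ; in particular X_α is a proper subset of X_{s(α)}. -/
/-- A directed graph `E = (E⁰, E¹, s, r)`. -/
structure DirGraph : Type 1 where
  V : Type
  Edge : Type
  src : Edge → V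
  rng : Edge → V

namespace DirGraph

variable {G : DirGraph}

/-- A vertex is a sink if no edge has it as its source. -/
def IsSink (G : DirGraph) (v : G.V) : Prop := ∀ e : G.Edge, G.src e ≠ v

/-- A finite path (of length at least one): a nonempty list of edges such that the range of
each edge is the source of the next. -/
structure FinPath (G : DirGraph) : Type where
  edges : List G.Edge
  ne : edges ≠ []
  chain : edges.Chain' (fun e f => G.rng e = G.src f)

/-- The source vertex of a finite path. -/
def FinPath.source (p : FinPath G) : G.V := G.src (p.edges.head p.ne)

/-- The range vertex of a finite path. -/
def FinPath.range (p : FinPath G) : G.V := G.rng (p.edges.getLast p.ne)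

/-- The length of a finite path. -/
def FinPath.length (p : FinPath G) : ℕ := p.edges.length

/-- Concatenation of finite paths `p` and `q` with `r(p) = s(q)`. -/
def FinPath.concat (p q : FinPath G) (h : p.range = q.source) : FinPath G where
  edges := p.edges ++ q.edges
  ne := fun hc => p.ne (List.append_eq_nil_iff.mp hc).1
  chain := List.isChain_append.mpr
    ⟨p.chain, q.chain, by
      intro x hx y hy
      rw [List.getLast?_eq_some_getLast p.ne] at hx
      rw [List.head?_eq_head q.ne] at hy
      simp only [Option.mem_def, Option.some.injEq] at hx hy
      rw [← hx, ← hy]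
      exact h⟩

theorem FinPath.concat_range (p q : FinPath G) (h : p.range = q.source) :
    (p.concat q h).range = q.range := by
  simp only [FinPath.range, FinPath.concat, List.getLast_append_of_ne_nil _ q.ne]

theorem FinPath.concat_source (p q : FinPath G) (h : p.range = q.source) :
    (p.concat q h).source = p.source := by
  simp only [FinPath.source, FinPath.concat, List.head_append_of_ne_nil p.ne]

/-- An infinite path: a sequence of edges such that the range of each edge is the source of
the next. -/
structure InfPath (G : DirGraph) : Type where
  edges : ℕ → G.Edge
  chain : ∀ i, G.rng (edges i) = G.src (edges (i + 1))

/-- Prepending a finite path `b` to an infinite path `ξ` with `r(b) = s(ξ)`. -/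
def InfPath.prepend (b : FinPath G) (ξ : InfPath G) (h : b.range = G.src (ξ.edges 0)) :
    InfPath G where
  edges := fun i => if hi : i < b.edges.length then b.edges[i]
                    else ξ.edges (i - b.edges.length)
  chain := by
    intro i
    split_ifs with h1 h2 h3
    · exact List.isChain_iff_getElem.mp b.chain i (by omega)
    · have hi : i = b.edges.length - 1 := by omega
      have h0 : i + 1 - b.edges.length = 0 := by omega
      rw [h0]
      subst hi
      rw [← List.getLast_eq_getElem b.ne]
      exact h
    · omega
    · have : i + 1 - b.edges.length = (i - b.edges.length) + 1 := by omega
      rw [this]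
      exact ξ.chain (i - b.edges.length)

/-- The set `X`: finite paths ending in a sink, together with the sinks themselves and the
infinite paths. -/
inductive XElem (G : DirGraph) : Type
  | fin (p : FinPath G) (h : G.IsSink p.range)
  | vertex (v : G.V) (h : G.IsSink v)
  | inf (ξ : InfPath G)

/-- The source of an element of `X`. -/
def XElem.source : XElem G → G.V
  | .fin p _ => p.source
  | .vertex v _ => v
  | .inf ξ => G.src (ξ.edges 0)

/-- `a` is an initial subpath of `x ∈ X`. -/
def IsInitialSub (a : FinPath G) : XElem G → Prop
  | .fin p _ => a.edges <+: p.edges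
  | .vertex _ _ => False
  | .inf ξ => ∀ (i : ℕ) (hi : i < a.edges.length), a.edges[i] = ξ.edges i

/-- The set `X_a = {ξ ∈ X : a is an initial subpath of ξ}` for a finite path `a`. -/
def Xpath (a : FinPath G) : Set (XElem G) := {x | IsInitialSub a x}

/-- The set `X_v = {ξ ∈ X : s(ξ) = v}` for a vertex `v`. -/
def Xvert (v : G.V) : Set (XElem G) := {x | x.source = v}

/-- The set `X_{a⁻¹} = {ξ ∈ X : s(ξ) = r(a)}` for a finite path `a`. -/
def XpathInv (a : FinPath G) : Set (XElem G) := {x | x.source = a.range}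

/-- The map `θ_b : X_{b⁻¹} → X`, `θ_b(ξ) = bξ` (concatenation; `b·r(b) := b` when `r(b)`
is a sink). -/
def theta (b : FinPath G) : (x : XElem G) → x.source = b.range → XElem G
  | .fin p hp, hx => .fin (b.concat p hx.symm) (by have e := FinPath.concat_range b p hx.symm; exact e ▸ hp)
  | .vertex v hv, hx => .fin b (hx ▸ hv)
  | .inf ξ, hx => .inf (ξ.prepend b hx.symm)

/-- The map `θ_{b⁻¹} : X_b → X`, deleting the initial subpath `b` (with `θ_{b⁻¹}(b) = r(b)`
when `r(b)` is a sink). -/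
def delete (b : FinPath G) : (x : XElem G) → IsInitialSub b x → XElem G
  | .fin p hp, _ =>
      if h : p.edges.length ≤ b.edges.length then .vertex p.range hp
      else .fin ⟨p.edges.drop b.edges.length,
                 fun hc => h (List.drop_eq_nil_iff.mp hc),
                 p.chain.drop _⟩
        (by
          have hne : p.edges.drop b.edges.length ≠ [] :=
            fun hc => h (List.drop_eq_nil_iff.mp hc)
          show G.IsSink (G.rng ((p.edges.drop b.edges.length).getLast hne))
          have : (p.edges.drop b.edges.length).getLast hne = p.edges.getLast p.ne := by
            rw [List.getLast_eq_getElem, List.getLast_eq_getElem, List.getElem_drop]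
            congr 1
            simp only [List.length_drop]
            omega
          rw [this]
          exact hp)
  | .vertex _ _, hx => absurd hx id
  | .inf ξ, _ => .inf ⟨fun i => ξ.edges (i + b.edges.length),
      fun i => by
        have h' := ξ.chain (i + b.edges.length)
        show G.rng (ξ.edges (i + b.edges.length)) = G.src (ξ.edges (i + 1 + b.edges.length))
        rwa [show i + 1 + b.edges.length = i + b.edges.length + 1 from by omega]⟩

/-- Deleting an initial subpath `b` of `x ∈ X_b` produces an element of `X_{b⁻¹}`. -/
theorem source_delete (b : FinPath G) (x : XElem G) (hx : IsInitialSub b x) :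
    (delete b x hx).source = b.range := by
  cases x with
  | vertex v hv => exact absurd hx id
  | inf ξ =>
      have hlen : 0 < b.edges.length := List.length_pos_iff.mpr b.ne
      show G.src (ξ.edges (0 + b.edges.length)) = b.range
      have h1 : b.edges.getLast b.ne = ξ.edges (b.edges.length - 1) := by
        rw [List.getLast_eq_getElem]
        exact hx _ (by omega)
      have h2 := ξ.chain (b.edges.length - 1)
      rw [show b.edges.length - 1 + 1 = b.edges.length by omega] at h2
      rw [show (0 : ℕ) + b.edges.length = b.edges.length by omega]
      show G.src (ξ.edges b.edges.length) = G.rng (b.edges.getLast b.ne)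
      rw [h1]
      exact h2.symm
  | fin p hp =>
      by_cases h : p.edges.length ≤ b.edges.length
      · have hle : b.edges.length ≤ p.edges.length := hx.length_le
        have heq : b.edges = p.edges := hx.eq_of_length (by omega)
        show (if h : p.edges.length ≤ b.edges.length then XElem.vertex p.range hp
              else _).source = b.range
        rw [dif_pos h]
        show G.rng (p.edges.getLast p.ne) = G.rng (b.edges.getLast b.ne)
        have hgl : p.edges.getLast p.ne = b.edges.getLast b.ne := by
          apply Option.some_injective
          rw [← List.getLast?_eq_some_getLast p.ne, ← List.getLast?_eq_some_getLast b.ne, heq]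
        rw [hgl]
      · have hlen : 0 < b.edges.length := List.length_pos_iff.mpr b.ne
        show (if h : p.edges.length ≤ b.edges.length then XElem.vertex p.range hp
              else _).source = b.range
        rw [dif_neg h]
        show G.src ((p.edges.drop b.edges.length).head _) = b.range
        have hdlt : b.edges.length < p.edges.length := by omega
        have hhead : (p.edges.drop b.edges.length).head
            (fun hc => h (List.drop_eq_nil_iff.mp hc)) = p.edges[b.edges.length] := by
          rw [List.head_eq_getElem, List.getElem_drop]
          simp
        rw [hhead]
        have h1 : b.edges.getLast b.ne = p.edges[b.edges.length - 1] := by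
          rw [List.getLast_eq_getElem]
          exact hx.getElem (by omega)
        have h2 : G.rng (p.edges[b.edges.length - 1]'(by omega)) =
            G.src (p.edges[b.edges.length]'(by omega)) := by
          have h3 := List.isChain_iff_getElem.mp p.chain (b.edges.length - 1) (by omega)
          convert h3 using 3
          all_goals omega
        show G.src p.edges[b.edges.length] = G.rng (b.edges.getLast b.ne)
        rw [h1]
        exact h2.symm

/-- The map `θ_{ab⁻¹} : X_b → X_a` for finite paths `a, b` with `r(a) = r(b)`: it deletes
the initial subpath `b` and prepends `a`. -/
def thetaRepl (a b : FinPath G) (hr : a.range = b.range) (x : XElem G)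
    (hx : IsInitialSub b x) : XElem G :=
  theta a (delete b x hx) (by rw [source_delete]; exact hr.symm)
/-- A closed path: a finite path whose source and range coincide. -/
def FinPath.IsClosed (p : FinPath G) : Prop := p.source = p.range

/-- An exit for a finite path `α = α₁…αₙ`: an edge `e` with `s(e) = s(αᵢ)` and `e ≠ αᵢ`
for some `i`. -/
def FinPath.HasExit (p : FinPath G) : Prop :=
  ∃ (i : ℕ) (hi : i < p.edges.length) (e : G.Edge),
    G.src e = G.src p.edges[i] ∧ e ≠ p.edges[i]

/-- Condition (L): every closed path has an exit. -/
def ConditionL (G : DirGraph) : Prop :=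
  ∀ p : FinPath G, p.IsClosed → p.HasExit

end DirGraph

open DirGraph

/-- From any vertex there is an element of `X` with that source. -/
lemma exists_xelem_source (G : DirGraph) (v : G.V) : ∃ x : XElem G, x.source = v := by
  classical
  have hch : ∀ w : G.V, ¬ G.IsSink w → ∃ e : G.Edge, G.src e = w := by
    intro w hw
    unfold IsSink at hw
    push_neg at hw
    exact hw
  let step : G.V → Option G.Edge :=
    fun w => if h : G.IsSink w then none else some (hch w h).choose
  have step_some : ∀ w e, step w = some e → G.src e = w := by
    intro w e h
    by_cases hw : G.IsSink w
    · exact absurd h (by simp [step, hw])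
    · have h' : some (hch w hw).choose = some e := by
        rw [← h]; simp [step, hw]
      rw [← Option.some_inj.mp h']
      exact (hch w hw).choose_spec
  have step_none : ∀ w, step w = none → G.IsSink w := by
    intro w h
    by_cases hw : G.IsSink w
    · exact hw
    · exact absurd h (by simp [step, hw])
  let f : ℕ → Option G.Edge :=
    fun n => Nat.rec (step v) (fun _ o => o.bind (fun e => step (G.rng e))) n
  have hf0 : f 0 = step v := rfl
  have hfs : ∀ n, f (n + 1) = (f n).bind (fun e => step (G.rng e)) := fun n => rfl
  rcases Classical.em (∀ n, ∃ e, f n = some e) with hall | hall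
  · -- infinite path
    refine ⟨.inf ⟨fun n => (hall n).choose, ?_⟩, ?_⟩
    · intro n
      have h1 : f n = some (hall n).choose := (hall n).choose_spec
      have h2 : f (n + 1) = some (hall (n + 1)).choose := (hall (n + 1)).choose_spec
      have h3 : (f n).bind (fun e => step (G.rng e)) = some (hall (n + 1)).choose :=
        (hfs n).symm.trans h2
      rw [h1] at h3
      simp only [Option.bind_some] at h3
      exact (step_some _ _ h3).symm
    · show G.src (hall 0).choose = v
      apply step_some
      rw [← hf0]
      exact (hall 0).choose_spec
  · push_neg at hall
    have hex : ∃ n, f n = none := by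
      obtain ⟨n, hn⟩ := hall
      refine ⟨n, ?_⟩
      cases h : f n with
      | none => rfl
      | some e => exact absurd h (hn e)
    obtain ⟨n, hnone, hmin⟩ := wellFounded_lt.has_min {n | f n = none} hex
    cases hfind : n with
    | zero =>
        rw [hfind] at hnone
        exact ⟨.vertex v (step_none v (hf0 ▸ hnone)), rfl⟩
    | succ m =>
        have hm : f m ≠ none := fun hc => hmin m hc (by omega)
        obtain ⟨e, he⟩ := Option.ne_none_iff_exists'.mp hm
        rw [hfind] at hnone
        have hnone' : f (m + 1) = none := hnone
        have hsnk : step (G.rng e) = none := by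
          rw [hfs m, he] at hnone'
          simpa using hnone'
        -- build a finite path ending with the last found edge
        have key : ∀ k e', f k = some e' →
            ∃ p : FinPath G, p.source = v ∧ p.edges.getLast? = some e' := by
          intro k
          induction k with
          | zero =>
              intro e' h
              rw [hf0] at h
              refine ⟨⟨[e'], by simp, List.isChain_singleton e'⟩, ?_, rfl⟩
              show G.src e' = v
              exact step_some _ _ h
          | succ k ih =>
              intro e' h
              rw [hfs k] at h
              cases hfk : f k with
              | none => rw [hfk] at h; cases h
              | some e'' =>
                  rw [hfk] at h
                  simp only [Option.bind_some] at h
                  obtain ⟨p, hps, hpl⟩ := ih e'' hfk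
                  have hlast : p.edges.getLast p.ne = e'' := by
                    have := List.getLast?_eq_getLast p.ne
                    rw [hpl] at this
                    exact (Option.some_injective _ this.symm)
                  have hrange : p.range = G.src e' := by
                    show G.rng (p.edges.getLast p.ne) = G.src e'
                    rw [hlast]
                    exact (step_some _ _ h).symm
                  refine ⟨p.concat ⟨[e'], by simp, List.isChain_singleton e'⟩ hrange, ?_, ?_⟩
                  · exact (FinPath.concat_source _ _ _).trans hps
                  · show (p.edges ++ [e']).getLast? = some e'
                    exact List.getLast?_concat
        obtain ⟨p, hps, hpl⟩ := key m e he
        have hlast : p.edges.getLast p.ne = e := by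
          have := List.getLast?_eq_getLast p.ne
          rw [hpl] at this
          exact (Option.some_injective _ this.symm)
        have hsink : G.IsSink p.range := by
          show G.IsSink (G.rng (p.edges.getLast p.ne))
          rw [hlast]
          exact step_none _ hsnk
        exact ⟨.fin p hsink, hps⟩


lemma theta_source {G : DirGraph} (b : FinPath G) (x : XElem G) (h : x.source = b.range) :
    (theta b x h).source = b.source := by
  cases x with
  | fin p hp => exact b.concat_source p h.symm
  | vertex w hw => rfl
  | inf ξ =>
      show G.src ((InfPath.prepend b ξ h.symm).edges 0) = b.source
      have hlen : 0 < b.edges.length := List.length_pos_iff.mpr b.ne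
      show G.src (if h0 : 0 < b.edges.length then b.edges[0] else ξ.edges (0 - b.edges.length))
          = b.source
      rw [dif_pos hlen]
      show G.src b.edges[0] = G.src (b.edges.head b.ne)
      rw [List.head_eq_getElem]

/-- An initial subpath determines the source. -/
lemma source_of_initialSub {G : DirGraph} (a : FinPath G) (x : XElem G)
    (h : IsInitialSub a x) : x.source = a.source := by
  have ha : 0 < a.edges.length := List.length_pos_iff.mpr a.ne
  cases x with
  | vertex w hw => exact absurd h id
  | fin p hp =>
      show G.src (p.edges.head p.ne) = G.src (a.edges.head a.ne)
      rw [List.head_eq_getElem, List.head_eq_getElem]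
      rw [h.getElem ha]
  | inf ξ =>
      show G.src (ξ.edges 0) = G.src (a.edges.head a.ne)
      rw [List.head_eq_getElem, h 0 ha]

/-- If `E` satisfies condition (L), then for every closed path `α` there is `ξ ∈ X` with
`s(ξ) = s(α)` of which `α` is not an initial subpath; in particular `X_α ⊊ X_{s(α)}`. -/
theorem exists_not_initial_of_conditionL {G : DirGraph} (hL : ConditionL G)
    (α : G.FinPath) (hα : α.IsClosed) :
    (∃ ξ : XElem G, ξ.source = α.source ∧ ¬ IsInitialSub α ξ) ∧
      Xpath α ⊂ Xvert α.source := by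
  obtain ⟨i, hi, e, hsrc, hne⟩ := hL α hα
  -- the path `α₁…αᵢe`
  have htake : (α.edges.take i).length = i := by
    rw [List.length_take]; omega
  have hchain : (α.edges.take i ++ [e]).Chain' (fun x y => G.rng x = G.src y) := by
    apply List.isChain_append.mpr
    refine ⟨α.chain.take i, List.isChain_singleton e, ?_⟩
    intro x hx y hy
    simp only [List.head?_cons, Option.mem_def, Option.some.injEq] at hy
    subst hy
    by_cases hi0 : i = 0
    · subst hi0
      simp at hx
    · have hipos : 0 < i := by omega
      have hne' : α.edges.take i ≠ [] := by
        intro hc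
        rw [hc] at htake
        simp at htake
        omega
      rw [List.getLast?_eq_getLast hne'] at hx
      simp only [Option.mem_def, Option.some.injEq] at hx
      subst hx
      have hgl : (α.edges.take i).getLast hne' = α.edges[i - 1]'(by omega) := by
        rw [List.getLast_eq_getElem, List.getElem_take]
        congr 1
        rw [htake]
      rw [hgl, hsrc]
      have hc := List.isChain_iff_getElem.mp α.chain (i - 1) (by omega)
      rw [hc]
      congr 2
      omega
  set p : FinPath G := ⟨α.edges.take i ++ [e], by simp, hchain⟩ with hp
  have hplen : p.edges.length = i + 1 := by
    show (α.edges.take i ++ [e]).length = i + 1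
    simp [htake]
  have hpi : p.edges[i]'(by omega) = e := by
    show (α.edges.take i ++ [e])[i]'_ = e
    rw [List.getElem_append_right (by omega)]
    simp [htake]
  have hpsource : p.source = α.source := by
    show G.src (p.edges.head (by simp [hp])) = G.src (α.edges.head α.ne)
    rw [List.head_eq_getElem, List.head_eq_getElem]
    by_cases h0 : i = 0
    · subst h0
      show G.src ((α.edges.take 0 ++ [e])[0]'_) = _
      simp only [List.take_zero, List.nil_append]
      show G.src e = G.src α.edges[0]
      rw [hsrc]
    · show G.src ((α.edges.take i ++ [e])[0]'_) = _
      rw [List.getElem_append_left (by omega), List.getElem_take]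
  have hprange : p.range = G.rng e := by
    show G.rng (p.edges.getLast (by simp [hp])) = G.rng e
    congr 1
    rw [List.getLast_eq_getElem]
    have : p.edges.length - 1 = i := by omega
    simp_rw [this]
    exact hpi
  obtain ⟨x, hx⟩ := exists_xelem_source G (G.rng e)
  have hx' : x.source = p.range := by rw [hx, hprange]
  refine ⟨⟨theta p x hx', ?_, ?_⟩, ?_⟩
  · rw [theta_source, hpsource]
  · -- α is not an initial subpath of θ_p(x)
    intro hbad
    have hcon : α.edges[i] = e := by
      cases x with
      | vertex w hw =>
          have hpre : α.edges <+: p.edges := hbad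
          exact (hpre.getElem hi).trans hpi
      | fin q hq =>
          have hpre : α.edges <+: (p.concat q hx'.symm).edges := hbad
          have h1 := hpre.getElem hi
          have h2 : (p.concat q hx'.symm).edges[i]'(lt_of_lt_of_le hi hpre.length_le) = e := by
            show (p.edges ++ q.edges)[i]'_ = e
            refine (List.getElem_append_left (by omega : i < p.edges.length)).trans ?_
            exact hpi
          exact h1.trans h2
      | inf ξ =>
          have h1 : ∀ (j : ℕ) (hj : j < α.edges.length),
              α.edges[j] = (InfPath.prepend p ξ hx'.symm).edges j := hbad
          have h2 : (InfPath.prepend p ξ hx'.symm).edges i = p.edges[i]'(by omega) := by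
            show (if h : i < p.edges.length then p.edges[i]
                  else ξ.edges (i - p.edges.length)) = _
            rw [dif_pos (by omega : i < p.edges.length)]
          exact (h1 i hi).trans (h2.trans hpi)
    exact hne hcon.symm
  · constructor
    · intro y hy
      exact source_of_initialSub α y hy
    · intro hsub
      have hmem : theta p x hx' ∈ Xvert α.source := by
        show (theta p x hx').source = α.source
        rw [theta_source, hpsource]
      have hmem2 := hsub hmem
      have hcon : α.edges[i] = e := by
        cases x with
        | vertex w hw =>
            have hpre : α.edges <+: p.edges := hmem2
            exact (hpre.getElem hi).trans hpi
        | fin q hq =>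
            have hpre : α.edges <+: (p.concat q hx'.symm).edges := hmem2
            have h1 := hpre.getElem hi
            have h2 : (p.concat q hx'.symm).edges[i]'(lt_of_lt_of_le hi hpre.length_le) = e := by
              show (p.edges ++ q.edges)[i]'_ = e
              refine (List.getElem_append_left (by omega : i < p.edges.length)).trans ?_
              exact hpi
            exact h1.trans h2
        | inf ξ =>
            have h1 : ∀ (j : ℕ) (hj : j < α.edges.length),
                α.edges[j] = (InfPath.prepend p ξ hx'.symm).edges j := hmem2
            have h2 : (InfPath.prepend p ξ hx'.symm).edges i = p.edges[i]'(by omega) := by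
              show (if h : i < p.edges.length then p.edges[i]
                    else ξ.edges (i - p.edges.length)) = _
              rw [dif_pos (by omega : i < p.edges.length)]
            exact (h1 i hi).trans (h2.trans hpi)
      exact hne hcon.symm
end
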